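/- arXiv:1812.08119 — 5 statements merged into one kernel-verified Lean document; each statement's English description precedes it below -/
import Mathlib

section
/- Under momentum-SGD with momentum μ = 1 + αλ - q√(αλ) for q > 2 and 0 < αλ < 1 satisfying 0 < μ < 1, the weight sequence satisfies |w_t| ≤ C (1 - ((q - √(q²-4))/2)√(αλ))^t |w_0| for the constant C = (q + √(q²-4))/(2√(q²-4)) + 1. -/
set_option maxHeartbeats 800000

/-- Momentum-SGD with momentum μ = 1 + αλ - q√(αλ), q > 2, 0 < αλ < 1, 0 < μ < 1,
applied to the weight-decay gradient g_t = λw_t, satisfies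
|w_t| ≤ C (1 - ((q - √(q²-4))/2)√(αλ))^t |w_0| with
C = (q + √(q²-4))/(2√(q²-4)) + 1. -/
theorem msgd_weight_decay_rate
    (α lam q : ℝ) (hα : 0 < α) (hlam : 0 < lam)
    (h0 : 0 < α * lam) (h1 : α * lam < 1) (hq : 2 < q)
    (μ : ℝ) (hμdef : μ = 1 + α * lam - q * Real.sqrt (α * lam))
    (hμ0 : 0 < μ) (hμ1 : μ < 1)
    (v w : ℕ → ℝ) (hv0 : v 0 = 0)
    (hv : ∀ t : ℕ, v (t + 1) = μ * v t - α * lam * w t)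
    (hw : ∀ t : ℕ, w (t + 1) = w t + v (t + 1)) :
    ∀ t : ℕ,
      |w t| ≤ ((q + Real.sqrt (q ^ 2 - 4)) / (2 * Real.sqrt (q ^ 2 - 4)) + 1)
        * (1 - (q - Real.sqrt (q ^ 2 - 4)) / 2 * Real.sqrt (α * lam)) ^ t
        * |w 0| := by
  set s : ℝ := Real.sqrt (α * lam) with hs
  set d : ℝ := Real.sqrt (q ^ 2 - 4) with hd
  have hs0 : 0 < s := Real.sqrt_pos.mpr h0
  have hs2 : s ^ 2 = α * lam := Real.sq_sqrt h0.le
  have hs1 : s < 1 := by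
    rw [hs]
    have := Real.sqrt_lt_sqrt h0.le h1
    simpa using this
  have hd0 : 0 < d := Real.sqrt_pos.mpr (by nlinarith)
  have hd2 : d ^ 2 = q ^ 2 - 4 := Real.sq_sqrt (by nlinarith)
  have hdq : d < q := by nlinarith
  have hμ' : μ = 1 + s ^ 2 - q * s := by rw [hμdef, hs2]
  have hfac : μ = ((q - d) / 2 - s) * ((q + d) / 2 - s) := by
    rw [hμ']; nlinarith [hd2]
  have h2 : 1 < (q + d) / 2 := by nlinarith
  have hslt : s < (q - d) / 2 := by nlinarith [hfac, hμ0]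
  set β : ℝ := 1 - (q - d) / 2 * s with hβ
  set γ : ℝ := 1 - (q + d) / 2 * s with hγ
  have hsum : β + γ = 1 + μ - s ^ 2 := by rw [hβ, hγ, hμ']; ring
  have hprod : β * γ = μ := by rw [hβ, hγ, hμ']; nlinarith [hd2]
  have hγβ : γ ≤ β := by rw [hβ, hγ]; nlinarith [mul_pos hd0 hs0]
  have hγ0 : 0 < γ := by
    have h3 := mul_lt_mul_of_pos_left hslt (show (0:ℝ) < (q + d) / 2 by linarith)
    rw [hγ]; nlinarith [hd2]
  have hβ0 : 0 < β := lt_of_lt_of_le hγ0 hγβ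
  set a : ℝ := ((q + d) / 2 - s) / d with ha
  set b : ℝ := (s - (q - d) / 2) / d with hb
  have ha0 : 0 < a := div_pos (by linarith) hd0
  have hb0 : b ≤ 0 := div_nonpos_of_nonpos_of_nonneg (by linarith) hd0.le
  have hab : a + b = 1 := by rw [ha, hb]; field_simp; ring
  -- closed form
  have key : ∀ t : ℕ, w t = (a * β ^ t + b * γ ^ t) * w 0
      ∧ w (t + 1) = (a * β ^ (t + 1) + b * γ ^ (t + 1)) * w 0 := by
    intro t
    induction t with
    | zero =>
      constructor
      · simp [hab]
      · have h1' : w 1 = (1 - s ^ 2) * w 0 := by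
          rw [hw 0, hv 0, hv0, hs2]; ring
        rw [h1']
        have : a * β ^ 1 + b * γ ^ 1 = 1 - s ^ 2 := by
          rw [ha, hb, hβ, hγ]; field_simp; nlinarith [hd2]
        rw [this]
    | succ n ih =>
      refine ⟨ih.2, ?_⟩
      have hrec : w (n + 2) = (1 + μ - s ^ 2) * w (n + 1) - μ * w n := by
        have hv1 : v (n + 1) = w (n + 1) - w n := by rw [hw n]; ring
        rw [hw (n + 1), hv (n + 1), hv1, hs2]; ring
      rw [hrec, ih.1, ih.2, ← hsum, ← hprod]
      ring
  intro t
  rw [(key t).1, abs_mul]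
  have hβt : (0:ℝ) ≤ β ^ t := pow_nonneg hβ0.le t
  have hγt : γ ^ t ≤ β ^ t := pow_le_pow_left₀ hγ0.le hγβ t
  have hγt0 : (0:ℝ) ≤ γ ^ t := pow_nonneg hγ0.le t
  have hlow : 0 ≤ a * β ^ t + b * γ ^ t := by
    have : b * β ^ t ≤ b * γ ^ t := mul_le_mul_of_nonpos_left hγt hb0
    nlinarith [mul_nonneg ha0.le hβt]
  have hup : a * β ^ t + b * γ ^ t ≤ ((q + d) / (2 * d) + 1) * β ^ t := by
    have hbγ : b * γ ^ t ≤ 0 := mul_nonpos_of_nonpos_of_nonneg hb0 hγt0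
    have haC : a ≤ (q + d) / (2 * d) + 1 := by
      rw [ha, div_le_iff₀ hd0]
      have : ((q + d) / (2 * d)) * d = (q + d) / 2 := by field_simp
      nlinarith [this, hs0, hd0]
    nlinarith [mul_le_mul_of_nonneg_right haC hβt]
  rw [abs_of_nonneg hlow]
  exact mul_le_mul_of_nonneg_right hup (abs_nonneg _)
end

section
/- Under Adam-style weight-decay dynamics, the per-step change satisfies |w_t - w_{t-1}| ≤ α/√(1-β₂) =: ν′, provided β₁ ≤ β₂; hence if w_{t-1} > ν′ then w_t > 0. -/
/-- Adam-style weight-decay dynamics: the per-step change is bounded by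
ν′ = α/√(1-β₂) (given β₁ ≤ β₂), hence if w_t > ν′ then w_{t+1} > 0. -/
theorem adam_step_bounded
    (α β₁ β₂ ε : ℝ) (hα : 0 < α) (hβ₁0 : 0 < β₁) (hβ₁₂ : β₁ ≤ β₂)
    (hβ₂1 : β₂ < 1) (hε : 0 < ε) (w : ℕ → ℝ)
    (hw : ∀ t : ℕ, w (t + 1) = w t
        - (α * (1 - β₁) / Real.sqrt (1 - β₂))
          * (∑ i ∈ Finset.range (t + 1), β₁ ^ (t - i) * w i)
          / Real.sqrt ((∑ i ∈ Finset.range (t + 1), β₂ ^ (t - i) * (w i) ^ 2) + ε)) :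
    ∀ t : ℕ,
      |w (t + 1) - w t| ≤ α / Real.sqrt (1 - β₂) ∧
      (w t > α / Real.sqrt (1 - β₂) → w (t + 1) > 0) := by
  intro t
  have hβ₂0 : 0 < β₂ := lt_of_lt_of_le hβ₁0 hβ₁₂
  have hβ₁1 : β₁ < 1 := lt_of_le_of_lt hβ₁₂ hβ₂1
  have h1β₂ : (0:ℝ) < 1 - β₂ := by linarith
  have h1β₁ : (0:ℝ) < 1 - β₁ := by linarith
  have hsβ₂ : 0 < Real.sqrt (1 - β₂) := Real.sqrt_pos.mpr h1β₂
  set m := ∑ i ∈ Finset.range (t + 1), β₁ ^ (t - i) * w i with hm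
  set v := ∑ i ∈ Finset.range (t + 1), β₂ ^ (t - i) * (w i) ^ 2 with hv
  have hv0 : 0 ≤ v :=
    Finset.sum_nonneg fun i _ => mul_nonneg (pow_nonneg hβ₂0.le _) (sq_nonneg _)
  have hs : 0 < Real.sqrt (v + ε) := Real.sqrt_pos.mpr (by linarith)
  -- Cauchy-Schwarz step
  have habs : |m| ≤ ∑ i ∈ Finset.range (t + 1), β₁ ^ (t - i) * |w i| := by
    refine (Finset.abs_sum_le_sum_abs _ _).trans (le_of_eq ?_)
    refine Finset.sum_congr rfl fun i _ => ?_
    rw [abs_mul, abs_of_nonneg (pow_nonneg hβ₁0.le _)]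
  have hCS : (∑ i ∈ Finset.range (t + 1), β₁ ^ (t - i) * |w i|) ^ 2 ≤
      (∑ i ∈ Finset.range (t + 1), β₁ ^ (t - i)) *
      (∑ i ∈ Finset.range (t + 1), β₁ ^ (t - i) * (w i) ^ 2) := by
    have h := Finset.sum_mul_sq_le_sq_mul_sq (Finset.range (t + 1))
      (fun i => Real.sqrt (β₁ ^ (t - i)))
      (fun i => Real.sqrt (β₁ ^ (t - i)) * |w i|)
    simp only [Real.sq_sqrt (pow_nonneg hβ₁0.le _)] at h
    calc (∑ i ∈ Finset.range (t + 1), β₁ ^ (t - i) * |w i|) ^ 2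
        = (∑ i ∈ Finset.range (t + 1),
            Real.sqrt (β₁ ^ (t - i)) * (Real.sqrt (β₁ ^ (t - i)) * |w i|)) ^ 2 := by
          congr 1
          refine Finset.sum_congr rfl fun i _ => ?_
          rw [← mul_assoc, Real.mul_self_sqrt (pow_nonneg hβ₁0.le _)]
      _ ≤ (∑ i ∈ Finset.range (t + 1), β₁ ^ (t - i)) *
            (∑ i ∈ Finset.range (t + 1), (Real.sqrt (β₁ ^ (t - i)) * |w i|) ^ 2) := h
      _ = (∑ i ∈ Finset.range (t + 1), β₁ ^ (t - i)) *
            (∑ i ∈ Finset.range (t + 1), β₁ ^ (t - i) * (w i) ^ 2) := by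
          congr 1
          refine Finset.sum_congr rfl fun i _ => ?_
          rw [mul_pow, Real.sq_sqrt (pow_nonneg hβ₁0.le _), sq_abs]
  have hgeom : (∑ i ∈ Finset.range (t + 1), β₁ ^ (t - i)) ≤ 1 / (1 - β₁) := by
    have : (∑ i ∈ Finset.range (t + 1), β₁ ^ (t - i)) =
        ∑ k ∈ Finset.range (t + 1), β₁ ^ k := by
      rw [← Finset.sum_range_reflect]
      refine Finset.sum_congr rfl fun j hj => ?_
      have hj' := Finset.mem_range.mp hj
      congr 1
      omega
    rw [this]
    have hg : (1 - β₁) * ∑ k ∈ Finset.range (t + 1), β₁ ^ k = 1 - β₁ ^ (t + 1) := by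
      have hne : β₁ - 1 ≠ 0 := by linarith
      rw [geom_sum_eq (ne_of_lt hβ₁1) (t + 1)]
      field_simp
      ring
    rw [le_div_iff₀ h1β₁]
    have hp : 0 ≤ β₁ ^ (t + 1) := pow_nonneg hβ₁0.le _
    nlinarith
  have hterm : (∑ i ∈ Finset.range (t + 1), β₁ ^ (t - i) * (w i) ^ 2) ≤ v := by
    refine Finset.sum_le_sum fun i _ => ?_
    exact mul_le_mul_of_nonneg_right (pow_le_pow_left₀ hβ₁0.le hβ₁₂ _) (sq_nonneg _)
  -- key: (1-β₁)|m| ≤ √(v+ε)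
  have hkey : (1 - β₁) * |m| ≤ Real.sqrt (v + ε) := by
    have hsq : ((1 - β₁) * |m|) ^ 2 ≤ v + ε := by
      have h1 : |m| ^ 2 ≤ (1 / (1 - β₁)) * v := by
        calc |m| ^ 2 ≤ (∑ i ∈ Finset.range (t + 1), β₁ ^ (t - i) * |w i|) ^ 2 :=
              pow_le_pow_left₀ (abs_nonneg _) habs 2
          _ ≤ (∑ i ∈ Finset.range (t + 1), β₁ ^ (t - i)) *
              (∑ i ∈ Finset.range (t + 1), β₁ ^ (t - i) * (w i) ^ 2) := hCS
          _ ≤ (1 / (1 - β₁)) * v := by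
              refine mul_le_mul hgeom hterm
                (Finset.sum_nonneg fun i _ =>
                  mul_nonneg (pow_nonneg hβ₁0.le _) (sq_nonneg _)) (by positivity)
      have h2 : ((1 - β₁) * |m|) ^ 2 = (1 - β₁) ^ 2 * |m| ^ 2 := by ring
      rw [h2]
      have h3 : (1 - β₁) ^ 2 * |m| ^ 2 ≤ (1 - β₁) ^ 2 * ((1 / (1 - β₁)) * v) :=
        mul_le_mul_of_nonneg_left h1 (sq_nonneg _)
      have h4 : (1 - β₁) ^ 2 * ((1 / (1 - β₁)) * v) = (1 - β₁) * v := by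
        field_simp
      nlinarith
    have := Real.sqrt_le_sqrt hsq
    rwa [Real.sqrt_sq (by positivity)] at this
  -- the step bound
  have hstep : |w (t + 1) - w t| ≤ α / Real.sqrt (1 - β₂) := by
    rw [hw t]
    have heq : w t - α * (1 - β₁) / Real.sqrt (1 - β₂) * m / Real.sqrt (v + ε) - w t
        = -(α * (1 - β₁) / Real.sqrt (1 - β₂) * m / Real.sqrt (v + ε)) := by ring
    rw [heq, abs_neg, abs_div, abs_of_pos hs, abs_mul,
      abs_of_pos (by positivity : (0:ℝ) < α * (1 - β₁) / Real.sqrt (1 - β₂))]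
    rw [div_le_iff₀ hs]
    have : α * (1 - β₁) / Real.sqrt (1 - β₂) * |m|
        = (α / Real.sqrt (1 - β₂)) * ((1 - β₁) * |m|) := by ring
    rw [this]
    exact mul_le_mul_of_nonneg_left hkey (by positivity)
  refine ⟨hstep, fun hwt => ?_⟩
  have := abs_le.mp hstep
  linarith [this.1]
end

section
/- Suppose the Adam weight-decay sequence satisfies w_{t'} > δ ≥ ν′ for all 1 ≤ t' ≤ t, with w_0 > 0. Then w_t ≤ w_{t-1}(1 - ν/√(v_t + ε)), and in particular the sequence w_0, w_1, …, w_t is strictly decreasing. -/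
/-- If the Adam weight-decay sequence stays above δ ≥ ν′ = α/√(1-β₂) up to time t
(with w 0 > 0), then w_{τ+1} ≤ w_τ (1 - ν/√(v_{τ+1} + ε)) and the sequence is
strictly decreasing up to time t. -/
theorem adam_strictly_decreasing
    (α β₁ β₂ ε δ : ℝ) (hα : 0 < α) (hβ₁0 : 0 < β₁) (hβ₁₂ : β₁ ≤ β₂)
    (hβ₂1 : β₂ < 1) (hε : 0 < ε) (w : ℕ → ℝ)
    (hw : ∀ τ : ℕ, w (τ + 1) = w τ
        - (α * (1 - β₁) / Real.sqrt (1 - β₂))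
          * (∑ i ∈ Finset.range (τ + 1), β₁ ^ (τ - i) * w i)
          / Real.sqrt ((∑ i ∈ Finset.range (τ + 1), β₂ ^ (τ - i) * (w i) ^ 2) + ε))
    (hw0 : 0 < w 0) (hδ : α / Real.sqrt (1 - β₂) ≤ δ)
    (t : ℕ) (hbig : ∀ τ : ℕ, 1 ≤ τ → τ ≤ t → δ < w τ) :
    ∀ τ : ℕ, τ < t →
      w (τ + 1) ≤ w τ * (1 - (α * (1 - β₁) / Real.sqrt (1 - β₂))
          / Real.sqrt ((∑ i ∈ Finset.range (τ + 1), β₂ ^ (τ - i) * (w i) ^ 2) + ε))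
      ∧ w (τ + 1) < w τ := by
  have hβ₁1 : β₁ < 1 := lt_of_le_of_lt hβ₁₂ hβ₂1
  have hβ₂0 : 0 < β₂ := lt_of_lt_of_le hβ₁0 hβ₁₂
  have hs : 0 < Real.sqrt (1 - β₂) := Real.sqrt_pos.2 (by linarith)
  have hδ0 : 0 < δ := lt_of_lt_of_le (div_pos hα hs) hδ
  have hwpos : ∀ i : ℕ, i ≤ t → 0 < w i := by
    intro i hi
    rcases Nat.eq_zero_or_pos i with h | h
    · simpa [h] using hw0
    · exact lt_trans hδ0 (hbig i h hi)
  intro τ hτ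
  set ν := α * (1 - β₁) / Real.sqrt (1 - β₂) with hν
  have hν0 : 0 < ν := div_pos (mul_pos hα (by linarith)) hs
  set v := (∑ i ∈ Finset.range (τ + 1), β₂ ^ (τ - i) * (w i) ^ 2) with hv
  have hv0 : 0 ≤ v := Finset.sum_nonneg fun i _ => by positivity
  set S := Real.sqrt (v + ε) with hSdef
  have hS : 0 < S := Real.sqrt_pos.2 (by linarith)
  set m := (∑ i ∈ Finset.range (τ + 1), β₁ ^ (τ - i) * w i) with hm'
  have hwτ : 0 < w τ := hwpos τ (le_of_lt hτ)
  have hm : w τ ≤ m := by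
    have h1 := Finset.single_le_sum (f := fun i => β₁ ^ (τ - i) * w i)
      (fun i hi => by
        have : 0 < w i := hwpos i (le_trans (Nat.lt_succ_iff.mp (Finset.mem_range.mp hi)) (le_of_lt hτ))
        positivity)
      (Finset.self_mem_range_succ τ)
    simpa using h1
  have hwτ1 : w (τ + 1) = w τ - ν * m / S := hw τ
  have key : ν * w τ / S ≤ ν * m / S := by gcongr
  have hpos : 0 < ν * m / S := div_pos (mul_pos hν0 (lt_of_lt_of_le hwτ hm)) hS
  constructor
  · have e : w τ * (1 - ν / S) = w τ - ν * w τ / S := by ring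
    rw [hwτ1, e]; linarith
  · rw [hwτ1]; linarith
end

section
/- Suppose a positive sequence satisfies w_{τ+1} ≤ w_τ (1 - ν/√((1/2)^k w_0² + ε)) whenever kτ* ≤ τ ≤ (k+1)τ*, and ε ≤ (1/2)^k w_0² for the relevant values of k. Then w_{τ+1} ≤ exp(-τ*·(ν/w_0)·(2^{(τ/τ*)/2 - 1} - 1)) · w_0, i.e., w_τ decays doubly exponentially, as O(exp(-2^{cτ})) for some c > 0. -/
/-- Doubly exponential decay for Adam weight-decay dynamics: if the positive
sequence contracts with factor 1 - ν/√((1/2)^k w₀² + ε) on each block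
kτ* ≤ τ ≤ (k+1)τ*, and ε ≤ (1/2)^k w₀² for the relevant k, then
w_{τ+1} ≤ exp(-τ*(ν/w₀)(2^{(τ/τ*)/2 - 1} - 1)) w₀. -/
theorem adam_doubly_exponential_decay
    (ν ε w0 : ℝ) (hν : 0 < ν) (hε : 0 < ε) (hw0 : 0 < w0)
    (τs : ℕ) (hτs : 0 < τs)
    (w : ℕ → ℝ) (hinit : w 0 = w0) (hpos : ∀ τ : ℕ, 0 < w τ)
    (τ : ℕ)
    (hrec : ∀ k τ' : ℕ, k * τs ≤ τ' → τ' ≤ (k + 1) * τs →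
      w (τ' + 1) ≤ w τ' * (1 - ν / Real.sqrt ((1 / 2 : ℝ) ^ k * w0 ^ 2 + ε)))
    (hεk : ∀ k : ℕ, k ≤ τ / τs → ε ≤ (1 / 2 : ℝ) ^ k * w0 ^ 2) :
    w (τ + 1) ≤ Real.exp (-(τs : ℝ) * (ν / w0)
        * ((2 : ℝ) ^ (((τ : ℝ) / (τs : ℝ)) / 2 - 1) - 1)) * w0 := by
  set s := Real.sqrt 2 with hs
  have hs2 : s ^ 2 = 2 := Real.sq_sqrt (by norm_num)
  have hs1 : 1 < s := by nlinarith [Real.sqrt_nonneg 2]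
  have hsp : 0 < s := lt_trans one_pos hs1
  set f : ℕ → ℝ := fun t => 1 - ν / Real.sqrt ((1/2:ℝ)^(t/τs) * w0 ^ 2 + ε) with hf
  set x : ℕ → ℝ := fun i => ν * s ^ (i / τs) / (s * w0) with hx
  have hxnn : ∀ i : ℕ, 0 ≤ x i := fun i => by positivity
  have hargpos : ∀ t : ℕ, 0 < (1/2:ℝ)^(t/τs) * w0 ^ 2 + ε := fun t => by positivity
  have hstep : ∀ t : ℕ, w (t+1) ≤ w t * f t := by
    intro t
    refine hrec (t/τs) t (Nat.div_mul_le_self t τs) ?_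
    have h1 := Nat.div_add_mod t τs
    have h2 := Nat.mod_lt t hτs
    nlinarith [Nat.div_mul_le_self t τs]
  have hfpos : ∀ t : ℕ, 0 < f t := by
    intro t
    nlinarith [hstep t, hpos (t+1), hpos t]
  have hprod : ∀ t : ℕ, w (t+1) ≤ w0 * ∏ i ∈ Finset.range (t+1), f i := by
    intro t
    induction t with
    | zero => simpa [hinit] using hstep 0
    | succ n ih =>
        calc w (n+2) ≤ w (n+1) * f (n+1) := hstep (n+1)
          _ ≤ (w0 * ∏ i ∈ Finset.range (n+1), f i) * f (n+1) :=
              mul_le_mul_of_nonneg_right ih (hfpos (n+1)).le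
          _ = w0 * ∏ i ∈ Finset.range (n+2), f i := by
              rw [mul_assoc, ← Finset.prod_range_succ]
  -- per-term exponential bound
  have hfx : ∀ i : ℕ, i ≤ τ → f i ≤ Real.exp (-(x i)) := by
    intro i hi
    have hκ : i / τs ≤ τ / τs := Nat.div_le_div_right hi
    have hε' := hεk (i / τs) hκ
    have hposκ : (0:ℝ) < s ^ (i / τs) := pow_pos hsp _
    have hsq : (s * w0 / s ^ (i / τs)) ^ 2 = 2 * (1/2:ℝ)^(i/τs) * w0 ^ 2 := by
      have e1 : (s ^ (i/τs)) ^ 2 = (2:ℝ) ^ (i/τs) := by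
        rw [← pow_mul, mul_comm, pow_mul, hs2]
      have e2 : ((1:ℝ)/2) ^ (i/τs) = ((2:ℝ) ^ (i/τs))⁻¹ := by
        rw [one_div, inv_pow]
      rw [div_pow, mul_pow, hs2, e1, e2, div_eq_mul_inv]
      ring
    have hsqrt : Real.sqrt ((1/2:ℝ)^(i/τs) * w0 ^ 2 + ε) ≤ s * w0 / s ^ (i / τs) := by
      have h1 : (1/2:ℝ)^(i/τs) * w0 ^ 2 + ε ≤ (s * w0 / s ^ (i / τs)) ^ 2 := by
        rw [hsq]; nlinarith []
      calc Real.sqrt ((1/2:ℝ)^(i/τs) * w0 ^ 2 + ε)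
          ≤ Real.sqrt ((s * w0 / s ^ (i / τs)) ^ 2) := Real.sqrt_le_sqrt h1
        _ = s * w0 / s ^ (i / τs) := Real.sqrt_sq (by positivity)
    have hxle : x i ≤ ν / Real.sqrt ((1/2:ℝ)^(i/τs) * w0 ^ 2 + ε) := by
      have h2 : ν / (s * w0 / s ^ (i / τs)) = x i := by
        rw [hx]; field_simp
      rw [← h2]
      gcongr
    have := Real.add_one_le_exp (-(x i))
    have hfle : f i ≤ 1 - x i := by simp only [hf]; linarith
    linarith
  have hprodexp : ∏ i ∈ Finset.range (τ+1), f i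
      ≤ Real.exp (-∑ i ∈ Finset.range (τ+1), x i) := by
    have h1 : ∏ i ∈ Finset.range (τ+1), f i ≤ ∏ i ∈ Finset.range (τ+1), Real.exp (-(x i)) :=
      Finset.prod_le_prod (fun i _ => (hfpos i).le)
        (fun i hi => hfx i (Nat.lt_succ_iff.mp (Finset.mem_range.mp hi)))
    rw [← Real.exp_sum, Finset.sum_neg_distrib] at h1
    exact h1
  -- lower bound on the sum
  set K := τ / τs with hK
  have hblocks : ∀ m : ℕ, ∑ i ∈ Finset.range (m * τs), x i
      = ∑ k ∈ Finset.range m, (τs : ℝ) * (ν * s ^ k / (s * w0)) := by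
    intro m
    induction m with
    | zero => simp
    | succ n ih =>
        rw [Nat.succ_mul, Finset.sum_range_add, ih, Finset.sum_range_succ]
        congr 1
        have heq : ∀ j ∈ Finset.range τs, x (n * τs + j) = ν * s ^ n / (s * w0) := by
          intro j hj
          have hj' : j < τs := Finset.mem_range.mp hj
          have hd : (n * τs + j) / τs = n := by
            rw [mul_comm, Nat.mul_add_div hτs, Nat.div_eq_of_lt hj']
            omega
          simp [hx, hd]
        rw [Finset.sum_congr rfl heq, Finset.sum_const, Finset.card_range,
          nsmul_eq_mul]
  have hsum1 : ∑ i ∈ Finset.range (K * τs), x i ≤ ∑ i ∈ Finset.range (τ+1), x i := by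
    apply Finset.sum_le_sum_of_subset_of_nonneg
    · exact Finset.range_subset_range.mpr (Nat.le_succ_of_le (Nat.div_mul_le_self τ τs))
    · exact fun i _ _ => hxnn i
  have hgeom : ∑ k ∈ Finset.range K, (τs : ℝ) * (ν * s ^ k / (s * w0))
      = (τs : ℝ) * ν / (s * w0) * ((s ^ K - 1) / (s - 1)) := by
    rw [← Finset.mul_sum]
    have h3 : ∑ k ∈ Finset.range K, (ν * s ^ k / (s * w0))
        = ν / (s * w0) * ∑ k ∈ Finset.range K, s ^ k := by
      rw [Finset.mul_sum]; apply Finset.sum_congr rfl; intro k _; ring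
    rw [h3, geom_sum_eq (ne_of_gt hs1) K]
    ring
  -- rpow bound : A ≤ s^K / s
  set A : ℝ := (2:ℝ) ^ (((τ : ℝ) / (τs : ℝ)) / 2 - 1) with hA
  have hτsR : (0:ℝ) < (τs:ℝ) := by exact_mod_cast hτs
  have hrK : (τ : ℝ) / (τs : ℝ) < (K : ℝ) + 1 := by
    rw [div_lt_iff₀ hτsR]
    have hlt : τ < (K + 1) * τs := by
      have h1 : τs * K + τ % τs = τ := Nat.div_add_mod τ τs
      have h2 := Nat.mod_lt τ hτs
      calc τ = τs * K + τ % τs := h1.symm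
        _ < τs * K + τs := by omega
        _ = (K + 1) * τs := by ring
    calc (τ:ℝ) < ((K + 1) * τs : ℕ) := by exact_mod_cast hlt
      _ = ((K:ℝ) + 1) * (τs:ℝ) := by push_cast; ring
  have hsK : (s:ℝ) ^ K = (2:ℝ) ^ ((K:ℝ) / 2) := by
    rw [hs, Real.sqrt_eq_rpow, ← Real.rpow_natCast ((2:ℝ) ^ ((1:ℝ)/2)) K,
      ← Real.rpow_mul (by norm_num : (0:ℝ) ≤ 2)]
    congr 1
    ring
  have hArpow : A ≤ s ^ K / s := by
    have h1 : A ≤ (2:ℝ) ^ (((K:ℝ) + 1) / 2 - 1) :=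
      Real.rpow_le_rpow_of_exponent_le one_le_two (by linarith)
    have h2 : (2:ℝ) ^ (((K:ℝ) + 1) / 2 - 1) = s ^ K / s := by
      rw [hsK, hs, Real.sqrt_eq_rpow, ← Real.rpow_sub (by norm_num : (0:ℝ) < 2)]
      congr 1
      ring
    linarith [h2.le, h2.ge]
  -- key algebraic inequality
  have haK : (1:ℝ) ≤ s ^ K := one_le_pow₀ hs1.le
  have hcore : ∀ a : ℝ, 1 ≤ a → a / s - 1 ≤ (a - 1) / (s - 1) / s := by
    intro a ha
    have hss : (0:ℝ) < (s - 1) * s := by nlinarith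
    have h43 : (4:ℝ) ≤ 3 * s := by nlinarith
    rw [div_div, div_sub_one hsp.ne', div_le_div_iff₀ hsp hss]
    nlinarith [mul_nonneg (sub_nonneg.mpr ha) (sub_nonneg.mpr hs1.le), hs2]
  have hfinal : (τs : ℝ) * (ν / w0) * (A - 1) ≤ ∑ i ∈ Finset.range (τ+1), x i := by
    have h1 : (τs : ℝ) * (ν / w0) * (A - 1) ≤ (τs : ℝ) * (ν / w0) * (s ^ K / s - 1) :=
      mul_le_mul_of_nonneg_left (by linarith) (by positivity)
    have h2 : (τs : ℝ) * (ν / w0) * (s ^ K / s - 1)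
        ≤ (τs : ℝ) * ν / (s * w0) * ((s ^ K - 1) / (s - 1)) := by
      have h3 := mul_le_mul_of_nonneg_left (hcore (s ^ K) haK)
        (by positivity : (0:ℝ) ≤ (τs : ℝ) * ν / w0)
      calc (τs : ℝ) * (ν / w0) * (s ^ K / s - 1)
          = (τs : ℝ) * ν / w0 * (s ^ K / s - 1) := by ring
        _ ≤ (τs : ℝ) * ν / w0 * ((s ^ K - 1) / (s - 1) / s) := h3
        _ = (τs : ℝ) * ν / (s * w0) * ((s ^ K - 1) / (s - 1)) := by
            ring
    calc (τs : ℝ) * (ν / w0) * (A - 1)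
        ≤ (τs : ℝ) * ν / (s * w0) * ((s ^ K - 1) / (s - 1)) := le_trans h1 h2
      _ = ∑ i ∈ Finset.range (K * τs), x i := by rw [hblocks, hgeom]
      _ ≤ ∑ i ∈ Finset.range (τ+1), x i := hsum1
  -- assemble
  have hgoalexp : Real.exp (-∑ i ∈ Finset.range (τ+1), x i)
      ≤ Real.exp (-(τs : ℝ) * (ν / w0) * (A - 1)) := by
    apply Real.exp_le_exp.mpr
    linarith [hfinal]
  calc w (τ + 1) ≤ w0 * ∏ i ∈ Finset.range (τ+1), f i := hprod τ
    _ ≤ w0 * Real.exp (-∑ i ∈ Finset.range (τ+1), x i) :=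
        mul_le_mul_of_nonneg_left hprodexp hw0.le
    _ ≤ w0 * Real.exp (-(τs : ℝ) * (ν / w0) * (A - 1)) :=
        mul_le_mul_of_nonneg_left hgoalexp hw0.le
    _ = Real.exp (-(τs : ℝ) * (ν / w0) * (A - 1)) * w0 := mul_comm _ _
end

section
/- If the Adam weight-decay sequence w_t converges to a limit w* as t → ∞, then the step size |w_{t+1} - w_t| converges to α·|w*|/√(w*² + ε̃) for ε̃ = ε(1-β₂) (in the limit normalization), and since a convergent sequence has step sizes tending to 0, the limit must satisfy w* = 0. -/
open Filter Finset Topology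

lemma geom_partial_le {β : ℝ} (hβ0 : 0 ≤ β) (hβ1 : β < 1) (n : ℕ) :
    ∑ j ∈ range n, β ^ j ≤ 1 / (1 - β) := by
  have h1 : (0:ℝ) < 1 - β := by linarith
  have hn : 0 ≤ β ^ n := pow_nonneg hβ0 n
  have heq : ∑ j ∈ range n, β ^ j = (1 - β ^ n) / (1 - β) := by
    rw [geom_sum_eq (by linarith : β ≠ 1),
      div_eq_div_iff (by linarith : β - 1 ≠ 0) (by linarith : 1 - β ≠ 0)]
    ring
  rw [heq]
  gcongr
  linarith

lemma ewma_zero {β : ℝ} (hβ0 : 0 < β) (hβ1 : β < 1) {e : ℕ → ℝ}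
    (he : Tendsto e atTop (𝓝 0)) :
    Tendsto (fun t : ℕ => ∑ i ∈ range (t + 1), β ^ (t - i) * e i) atTop (𝓝 0) := by
  have hβne : β ≠ 0 := hβ0.ne'
  have h1β : (0:ℝ) < 1 - β := by linarith
  have hinv1 : (1:ℝ) ≤ β⁻¹ := (one_le_inv₀ hβ0).mpr hβ1.le
  set g : ℕ → ℝ := fun i => β⁻¹ ^ i with hg
  have hgnn : ∀ i, 0 ≤ g i := fun i => pow_nonneg (by positivity) i
  have hgdiv : Tendsto (fun n => ∑ i ∈ range n, g i) atTop atTop := by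
    apply tendsto_atTop_mono (fun n => ?_) tendsto_natCast_atTop_atTop
    calc (n:ℝ) = ∑ _i ∈ range n, (1:ℝ) := by simp
    _ ≤ ∑ i ∈ range n, g i := Finset.sum_le_sum fun i _ => one_le_pow₀ hinv1
  have hf : (fun i => e i * g i) =o[atTop] g := by
    have h1 : e =o[atTop] (fun _ : ℕ => (1:ℝ)) := (Asymptotics.isLittleO_one_iff ℝ).2 he
    simpa using h1.mul_isBigO (Asymptotics.isBigO_refl g atTop)
  have hsum := hf.sum_range hgnn hgdiv
  rw [NormedAddCommGroup.tendsto_nhds_zero]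
  intro ε hε
  have hc : 0 < ε * (1 - β) / 2 := by positivity
  have hev2 : ∀ᶠ t : ℕ in atTop,
      ‖∑ i ∈ range (t+1), e i * g i‖ ≤ ε * (1 - β) / 2 * ‖∑ i ∈ range (t+1), g i‖ :=
    (tendsto_add_atTop_nat 1).eventually (Asymptotics.isLittleO_iff.mp hsum hc)
  filter_upwards [hev2] with t ht
  have hpow : ∀ i ∈ range (t+1), β ^ t * g i = β ^ (t - i) := by
    intro i hi
    have hit : i ≤ t := Nat.lt_succ_iff.mp (Finset.mem_range.mp hi)
    rw [pow_sub₀ β hβne hit]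
    simp [g, inv_pow]
  have key : ∑ i ∈ range (t + 1), β ^ (t - i) * e i
      = β ^ t * ∑ i ∈ range (t+1), e i * g i := by
    rw [Finset.mul_sum]
    refine Finset.sum_congr rfl fun i hi => ?_
    rw [← hpow i hi]; ring
  have keyg : β ^ t * ∑ i ∈ range (t+1), g i ≤ 1 / (1 - β) := by
    rw [Finset.mul_sum]
    calc ∑ i ∈ range (t+1), β ^ t * g i = ∑ i ∈ range (t+1), β ^ (t - i) :=
          Finset.sum_congr rfl hpow
      _ = ∑ j ∈ range (t+1), β ^ j := by
          rw [← Finset.sum_range_reflect (fun j => β ^ j) (t+1)]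
          exact Finset.sum_congr rfl fun i hi => by norm_num
      _ ≤ 1 / (1 - β) := geom_partial_le hβ0.le hβ1 (t+1)
  have hgs : 0 ≤ ∑ i ∈ range (t+1), g i := Finset.sum_nonneg fun i _ => hgnn i
  rw [key]
  have hβt : 0 ≤ β ^ t := pow_nonneg hβ0.le t
  calc ‖β ^ t * ∑ i ∈ range (t+1), e i * g i‖
      = β ^ t * ‖∑ i ∈ range (t+1), e i * g i‖ := by
        rw [norm_mul, Real.norm_of_nonneg hβt]
    _ ≤ β ^ t * (ε * (1 - β) / 2 * ‖∑ i ∈ range (t+1), g i‖) := by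
        exact mul_le_mul_of_nonneg_left ht hβt
    _ = ε * (1 - β) / 2 * (β ^ t * ∑ i ∈ range (t+1), g i) := by
        rw [Real.norm_of_nonneg hgs]; ring
    _ ≤ ε * (1 - β) / 2 * (1 / (1 - β)) := by
        apply mul_le_mul_of_nonneg_left keyg hc.le
    _ = ε / 2 := by field_simp
    _ < ε := by linarith

lemma ewma_tendsto {β : ℝ} (hβ0 : 0 < β) (hβ1 : β < 1) {u : ℕ → ℝ} {L : ℝ}
    (hu : Tendsto u atTop (𝓝 L)) :
    Tendsto (fun t : ℕ => ∑ i ∈ range (t + 1), β ^ (t - i) * u i) atTop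
      (𝓝 (L / (1 - β))) := by
  have h1β : (0:ℝ) < 1 - β := by linarith
  have h0 : Tendsto (fun i => u i - L) atTop (𝓝 0) := by
    simpa using hu.sub_const L
  have h1 := ewma_zero hβ0 hβ1 h0
  have hgeom : Tendsto (fun t : ℕ => (∑ j ∈ range (t+1), β ^ j) * L) atTop
      (𝓝 ((1 - β)⁻¹ * L)) := by
    exact (((hasSum_geometric_of_lt_one hβ0.le hβ1).tendsto_sum_nat).comp
      (tendsto_add_atTop_nat 1)).mul_const L
  have hsum := h1.add hgeom
  have heq : ∀ t : ℕ, (∑ i ∈ range (t+1), β ^ (t - i) * (u i - L))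
      + (∑ j ∈ range (t+1), β ^ j) * L
      = ∑ i ∈ range (t+1), β ^ (t - i) * u i := by
    intro t
    have : (∑ j ∈ range (t+1), β ^ j) = ∑ i ∈ range (t+1), β ^ (t - i) := by
      rw [← Finset.sum_range_reflect (fun j => β ^ j) (t+1)]
      exact Finset.sum_congr rfl fun i hi => by norm_num
    rw [this, Finset.sum_mul, ← Finset.sum_add_distrib]
    exact Finset.sum_congr rfl fun i hi => by ring
  have : Tendsto (fun t : ℕ => ∑ i ∈ range (t+1), β ^ (t - i) * u i) atTop
      (𝓝 (0 + (1 - β)⁻¹ * L)) := by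
    apply hsum.congr heq
  simpa [div_eq_inv_mul] using this


/-- If the Adam weight-decay sequence converges to w*, then the step magnitudes
|w_{t+1} - w_t| converge to α|w*|/√(w*² + ε(1-β₂)); since step sizes of a
convergent sequence tend to 0, the limit must be w* = 0. -/
theorem adam_limit_point_is_zero
    (α β₁ β₂ ε : ℝ) (hα : 0 < α) (hβ₁0 : 0 < β₁) (hβ₁1 : β₁ < 1)
    (hβ₂0 : 0 < β₂) (hβ₂1 : β₂ < 1) (hε : 0 < ε)
    (w : ℕ → ℝ)
    (hw : ∀ t : ℕ, w (t + 1) = w t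
        - (α * (1 - β₁) / Real.sqrt (1 - β₂))
          * (∑ i ∈ Finset.range (t + 1), β₁ ^ (t - i) * w i)
          / Real.sqrt ((∑ i ∈ Finset.range (t + 1), β₂ ^ (t - i) * (w i) ^ 2) + ε))
    (wstar : ℝ)
    (hconv : Filter.Tendsto w Filter.atTop (nhds wstar)) :
    Filter.Tendsto (fun t : ℕ => |w (t + 1) - w t|) Filter.atTop
        (nhds (α * |wstar| / Real.sqrt (wstar ^ 2 + ε * (1 - β₂))))
    ∧ wstar = 0 := by
  have h1β₁ : (0:ℝ) < 1 - β₁ := by linarith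
  have h1β₂ : (0:ℝ) < 1 - β₂ := by linarith
  have hA : (0:ℝ) < wstar ^ 2 + ε * (1 - β₂) := by positivity
  have hsA : (0:ℝ) < Real.sqrt (wstar ^ 2 + ε * (1 - β₂)) := Real.sqrt_pos.mpr hA
  have hs2 : (0:ℝ) < Real.sqrt (1 - β₂) := Real.sqrt_pos.mpr h1β₂
  -- convergence of m and v
  have hm := ewma_tendsto hβ₁0 hβ₁1 hconv
  have hw2 : Tendsto (fun i => (w i) ^ 2) atTop (𝓝 (wstar ^ 2)) := hconv.pow 2
  have hv := ewma_tendsto hβ₂0 hβ₂1 hw2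
  -- denominator limit
  have hvden : Tendsto
      (fun t : ℕ => Real.sqrt ((∑ i ∈ Finset.range (t + 1), β₂ ^ (t - i) * (w i) ^ 2) + ε))
      atTop (𝓝 (Real.sqrt (wstar ^ 2 / (1 - β₂) + ε))) :=
    (Real.continuous_sqrt.tendsto _).comp (hv.add_const ε)
  have hden_pos : (0:ℝ) < Real.sqrt (wstar ^ 2 / (1 - β₂) + ε) :=
    Real.sqrt_pos.mpr (by positivity)
  -- the step sequence
  have hstep : Tendsto (fun t : ℕ => w (t + 1) - w t) atTop
      (𝓝 (-((α * (1 - β₁) / Real.sqrt (1 - β₂)) * (wstar / (1 - β₁))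
          / Real.sqrt (wstar ^ 2 / (1 - β₂) + ε)))) := by
    have h := (((hm.const_mul (α * (1 - β₁) / Real.sqrt (1 - β₂))).div hvden
      hden_pos.ne').neg)
    apply h.congr
    intro t
    simp only [Pi.div_apply]
    rw [hw t]
    ring
  -- identify the limit value
  have hval : -((α * (1 - β₁) / Real.sqrt (1 - β₂)) * (wstar / (1 - β₁))
          / Real.sqrt (wstar ^ 2 / (1 - β₂) + ε))
      = -(α * wstar / Real.sqrt (wstar ^ 2 + ε * (1 - β₂))) := by
    have hsq : Real.sqrt (wstar ^ 2 / (1 - β₂) + ε)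
        = Real.sqrt (wstar ^ 2 + ε * (1 - β₂)) / Real.sqrt (1 - β₂) := by
      rw [← Real.sqrt_div hA.le]
      congr 1
      field_simp
    rw [hsq]
    field_simp
  rw [hval] at hstep
  -- step sizes tend to 0
  have hzero : Tendsto (fun t : ℕ => w (t + 1) - w t) atTop (𝓝 0) := by
    have := (hconv.comp (tendsto_add_atTop_nat 1)).sub hconv
    simpa using this
  have huniq : -(α * wstar / Real.sqrt (wstar ^ 2 + ε * (1 - β₂))) = 0 :=
    tendsto_nhds_unique hstep hzero
  have hwstar : wstar = 0 := by
    have h2 : α * wstar = 0 := by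
      rcases div_eq_zero_iff.mp (neg_eq_zero.mp huniq) with h | h
      · exact h
      · exact absurd h hsA.ne'
    rcases mul_eq_zero.mp h2 with h | h
    · exact absurd h hα.ne'
    · exact h
  refine ⟨?_, hwstar⟩
  have habs := hstep.abs
  have : |-(α * wstar / Real.sqrt (wstar ^ 2 + ε * (1 - β₂)))|
      = α * |wstar| / Real.sqrt (wstar ^ 2 + ε * (1 - β₂)) := by
    rw [abs_neg, abs_div, abs_mul, abs_of_pos hα, abs_of_pos hsA]
  rwa [this] at habs
end
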